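/- With V = diag(σ_u² + D_i), Σ = V − X(XᵀV^{-1}X)^{-1}Xᵀ, e_i the i-th standard basis vector, B_i = D_i/(σ_u² + D_i), and β̃(σ_u²) = (XᵀV^{-1}X)^{-1}XᵀV^{-1}θ̂: the partial derivative of the Bayes estimator θ̂_i^B = (1−B_i)θ̂_i + B_i x_iᵀβ̃(σ_u²) with respect to σ_u² equals [B_i² D_i^{-1} e_iᵀ − B_i x_iᵀ(XᵀV^{-1}X)^{-1}XᵀV^{-2}] ũ, where ũ = θ̂ − Xβ̃(σ_u²); equivalently it equals B_i e_iᵀ Σ V^{-2} ũ. -/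

import Mathlib

open Matrix BigOperators

section BayesAux

attribute [local instance]
  Matrix.linftyOpNormedAddCommGroup Matrix.linftyOpNormedSpace
  Matrix.linftyOpNormedRing Matrix.linftyOpNormedAlgebra

private lemma aux_mulVecLin_injective {m p : ℕ} (X : Matrix (Fin m) (Fin p) ℝ)
    (hX : X.rank = p) : Function.Injective X.mulVecLin := by
  rw [← LinearMap.ker_eq_bot]
  have h := LinearMap.finrank_range_add_finrank_ker X.mulVecLin
  rw [Module.finrank_fin_fun] at h
  have hr : Module.finrank ℝ (LinearMap.range X.mulVecLin) = p := hX
  rw [hr] at h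
  have h0 : Module.finrank ℝ (LinearMap.ker X.mulVecLin) = 0 := by omega
  exact Submodule.finrank_eq_zero.mp h0

private lemma aux_isUnit {m p : ℕ} (v : Fin m → ℝ) (hv : ∀ k, 0 < v k)
    (X : Matrix (Fin m) (Fin p) ℝ) (hX : X.rank = p) :
    IsUnit (Xᵀ * Matrix.diagonal v * X) := by
  rw [← Matrix.mulVec_injective_iff_isUnit]
  have key : ∀ u : Fin p → ℝ, (Xᵀ * Matrix.diagonal v * X) *ᵥ u = 0 → u = 0 := by
    intro u hu
    have h1 : u ⬝ᵥ ((Xᵀ * Matrix.diagonal v * X) *ᵥ u) = 0 := by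
      rw [hu, dotProduct_zero]
    have h2 : u ⬝ᵥ ((Xᵀ * Matrix.diagonal v * X) *ᵥ u) = ∑ k, v k * (X *ᵥ u) k ^ 2 := by
      rw [← Matrix.mulVec_mulVec, ← Matrix.mulVec_mulVec, Matrix.dotProduct_mulVec,
        Matrix.vecMul_transpose]
      simp only [dotProduct, Matrix.mulVec_diagonal]
      exact Finset.sum_congr rfl fun k _ => by ring
    rw [h2] at h1
    have h3 : X *ᵥ u = 0 := by
      funext k
      have hk := (Finset.sum_eq_zero_iff_of_nonneg
        (fun k _ => mul_nonneg (hv k).le (sq_nonneg _))).mp h1 k (Finset.mem_univ k)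
      have h4 := (mul_eq_zero.mp hk).resolve_left (hv k).ne'
      simpa using (pow_eq_zero_iff two_ne_zero).mp h4
    have h5 : X.mulVecLin u = X.mulVecLin 0 := by
      simpa [Matrix.mulVecLin_apply] using h3
    exact aux_mulVecLin_injective X hX h5
  intro a b hab
  have h6 : (Xᵀ * Matrix.diagonal v * X) *ᵥ (a - b) = 0 := by
    rw [Matrix.mulVec_sub, hab, sub_self]
  exact sub_eq_zero.mp (key _ h6)

private lemma aux_hasDerivAt_matrix {a b : ℕ} {f : ℝ → Matrix (Fin a) (Fin b) ℝ}
    {f' : Matrix (Fin a) (Fin b) ℝ} {t : ℝ}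
    (h : ∀ i j, HasDerivAt (fun s => f s i j) (f' i j) t) : HasDerivAt f f' t := by
  have key : HasDerivAt
      (fun s => ∑ i : Fin a, ∑ j : Fin b, f s i j • Matrix.single i j (1:ℝ))
      (∑ i : Fin a, ∑ j : Fin b, f' i j • Matrix.single i j (1:ℝ)) t :=
    HasDerivAt.fun_sum fun i _ => HasDerivAt.fun_sum fun j _ => (h i j).smul_const _
  have e1 : ∀ g : Matrix (Fin a) (Fin b) ℝ,
      ∑ i : Fin a, ∑ j : Fin b, g i j • Matrix.single i j (1:ℝ) = g := by
    intro g
    conv_rhs => rw [Matrix.matrix_eq_sum_single g]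
    refine Finset.sum_congr rfl fun i _ => Finset.sum_congr rfl fun j _ => ?_
    rw [Matrix.smul_single, smul_eq_mul, mul_one]
  have e2 : (fun s => ∑ i : Fin a, ∑ j : Fin b, f s i j • Matrix.single i j (1:ℝ)) = f :=
    funext fun s => e1 (f s)
  rw [e2, e1] at key
  exact key

private lemma aux_entry_hasDerivAt {a b : ℕ} {f : ℝ → Matrix (Fin a) (Fin b) ℝ}
    {f' : Matrix (Fin a) (Fin b) ℝ} {t : ℝ} (h : HasDerivAt f f' t) (i : Fin a) (j : Fin b) :
    HasDerivAt (fun s => f s i j) (f' i j) t := by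
  let L : Matrix (Fin a) (Fin b) ℝ →ₗ[ℝ] ℝ :=
    { toFun := fun N => N i j
      map_add' := fun x y => rfl
      map_smul' := fun r x => rfl }
  exact (L.toContinuousLinearMap.hasFDerivAt).comp_hasDerivAt t h

private lemma aux_hasDerivAt_mul {a b c : ℕ} {F : ℝ → Matrix (Fin a) (Fin b) ℝ}
    {G : ℝ → Matrix (Fin b) (Fin c) ℝ} {F' : Matrix (Fin a) (Fin b) ℝ}
    {G' : Matrix (Fin b) (Fin c) ℝ} {t : ℝ}
    (hF : HasDerivAt F F' t) (hG : HasDerivAt G G' t) :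
    HasDerivAt (fun s => F s * G s) (F' * G t + F t * G') t := by
  apply aux_hasDerivAt_matrix
  intro i j
  have h := HasDerivAt.fun_sum (u := Finset.univ)
    (A := fun k s => F s i k * G s k j)
    (A' := fun k => F' i k * G t k j + F t i k * G' k j)
    (fun k _ => (aux_entry_hasDerivAt hF i k).mul (aux_entry_hasDerivAt hG k j))
  have e1 : (fun s => ∑ k, F s i k * G s k j) = fun s => (F s * G s) i j :=
    funext fun s => (Matrix.mul_apply).symm
  rw [e1] at h
  refine h.congr_deriv (Eq.symm ?_)
  simp [Matrix.add_apply, Matrix.mul_apply, Finset.sum_add_distrib]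

private lemma aux_hasDerivAt_const_mul {a b c : ℕ} (C : Matrix (Fin a) (Fin b) ℝ)
    {G : ℝ → Matrix (Fin b) (Fin c) ℝ} {G' : Matrix (Fin b) (Fin c) ℝ} {t : ℝ}
    (hG : HasDerivAt G G' t) : HasDerivAt (fun s => C * G s) (C * G') t := by
  simpa using aux_hasDerivAt_mul (hasDerivAt_const t C) hG

private lemma aux_hasDerivAt_mul_const {a b c : ℕ} {F : ℝ → Matrix (Fin a) (Fin b) ℝ}
    {F' : Matrix (Fin a) (Fin b) ℝ} {t : ℝ} (hF : HasDerivAt F F' t)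
    (C : Matrix (Fin b) (Fin c) ℝ) : HasDerivAt (fun s => F s * C) (F' * C) t := by
  simpa using aux_hasDerivAt_mul hF (hasDerivAt_const t C)

set_option maxHeartbeats 1000000 in
/-- Derivative of the Bayes estimator `θ̂_i^B(σ_u²) = (1−B_i)θ̂_i + B_i x_iᵀβ̃(σ_u²)` with
respect to `σ_u²` equals `[B_i²D_i⁻¹e_iᵀ − B_i x_iᵀ(XᵀV⁻¹X)⁻¹XᵀV⁻²]ũ`, which also equals
`B_i e_iᵀ Σ V⁻² ũ`, where `ũ = θ̂ − Xβ̃(σ_u²)` and `Σ = V − X(XᵀV⁻¹X)⁻¹Xᵀ`. -/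
theorem bayes_estimator_deriv {m p : ℕ} (σu : ℝ) (hσ : 0 < σu)
    (D : Fin m → ℝ) (hD : ∀ k, 0 < D k)
    (X : Matrix (Fin m) (Fin p) ℝ) (hX : X.rank = p)
    (θ : Fin m → ℝ) (i : Fin m) :
    let V : ℝ → Matrix (Fin m) (Fin m) ℝ := fun s => Matrix.diagonal fun k => s + D k
    let βt : ℝ → Fin p → ℝ := fun s => ((Xᵀ * (V s)⁻¹ * X)⁻¹ * Xᵀ * (V s)⁻¹).mulVec θ
    let B : ℝ → ℝ := fun s => D i / (s + D i)
    let θB : ℝ → ℝ := fun s => (1 - B s) * θ i + B s * (X i ⬝ᵥ βt s)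
    let ut : Fin m → ℝ := θ - X.mulVec (βt σu)
    let Sg : Matrix (Fin m) (Fin m) ℝ := V σu - X * (Xᵀ * (V σu)⁻¹ * X)⁻¹ * Xᵀ
    let dval : ℝ := (B σu) ^ 2 * (D i)⁻¹ * ut i
      - B σu * (X i ⬝ᵥ ((Xᵀ * (V σu)⁻¹ * X)⁻¹ * Xᵀ * (V σu)⁻¹ * (V σu)⁻¹).mulVec ut)
    HasDerivAt θB dval σu ∧
      dval = B σu * ((Sg * (V σu)⁻¹ * (V σu)⁻¹).mulVec ut) i := by
  intro V βt B θB ut Sg dval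
  simp only [θB, dval, Sg, ut, βt, B, V]
  have hw : ∀ k, (0:ℝ) < σu + D k := fun k => add_pos hσ (hD k)
  have hw0 : ∀ k, σu + D k ≠ 0 := fun k => (hw k).ne'
  -- inverse of the diagonal matrix
  have hVinv' : ∀ s : ℝ, (∀ k, s + D k ≠ 0) →
      (Matrix.diagonal fun k => s + D k)⁻¹ = Matrix.diagonal fun k => (s + D k)⁻¹ := by
    intro s hs
    apply Matrix.inv_eq_right_inv
    rw [Matrix.diagonal_mul_diagonal]
    have h : (fun k => (s + D k) * (s + D k)⁻¹) = fun _ : Fin m => (1:ℝ) :=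
      funext fun k => mul_inv_cancel₀ (hs k)
    rw [h, Matrix.diagonal_one]
  have hVG' := hVinv' σu hw0
  -- notation
  have hA0unit : IsUnit (Xᵀ * Matrix.diagonal (fun k => (σu + D k)⁻¹) * X) :=
    aux_isUnit _ (fun k => inv_pos.mpr (hw k)) X hX
  -- derivative of the entries
  have hdcomp : ∀ k : Fin m, HasDerivAt (fun s : ℝ => (s + D k)⁻¹)
      (-1 / (σu + D k) ^ 2) σu := by
    intro k
    simpa using ((hasDerivAt_id σu).add_const (D k)).fun_inv (hw0 k)
  have hd : HasDerivAt (fun s : ℝ => fun k : Fin m => (s + D k)⁻¹)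
      (fun k => -1 / (σu + D k) ^ 2) σu := hasDerivAt_pi.mpr hdcomp
  -- diagonal as a linear map
  let diagL : (Fin m → ℝ) →ₗ[ℝ] Matrix (Fin m) (Fin m) ℝ :=
    { toFun := Matrix.diagonal
      map_add' := fun a b => (Matrix.diagonal_add a b).symm
      map_smul' := fun r a => Matrix.diagonal_smul r a }
  have hg : HasDerivAt (fun s : ℝ => Matrix.diagonal fun k : Fin m => (s + D k)⁻¹)
      (-(Matrix.diagonal (fun k => (σu + D k)⁻¹) * Matrix.diagonal (fun k => (σu + D k)⁻¹)))
      σu := by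
    have h := (diagL.toContinuousLinearMap.hasFDerivAt
      (x := fun k : Fin m => (σu + D k)⁻¹)).comp_hasDerivAt σu hd
    refine h.congr_deriv (Eq.symm ?_)
    show _ = diagL _
    simp only [diagL, LinearMap.coe_mk, AddHom.coe_mk]
    rw [Matrix.diagonal_mul_diagonal, Matrix.diagonal_neg]
    exact congrArg Matrix.diagonal (funext fun k => by
      rw [← mul_inv, sq, neg_div, one_div])
  have hev : ∀ᶠ s in nhds σu, ∀ k, s + D k ≠ 0 := by
    rw [Filter.eventually_all]
    intro k
    have ht : Filter.Tendsto (fun s : ℝ => s + D k) (nhds σu) (nhds (σu + D k)) :=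
      (continuous_id.add continuous_const).tendsto σu
    exact ht.eventually_ne (hw0 k)
  have hVi : HasDerivAt (fun s : ℝ => (Matrix.diagonal fun k : Fin m => s + D k)⁻¹)
      (-(Matrix.diagonal (fun k => (σu + D k)⁻¹) * Matrix.diagonal (fun k => (σu + D k)⁻¹)))
      σu :=
    hg.congr_of_eventuallyEq (hev.mono fun s hs => hVinv' s hs)
  set G : Matrix (Fin m) (Fin m) ℝ := Matrix.diagonal (fun k => (σu + D k)⁻¹) with hGdef
  have hA : HasDerivAt (fun s : ℝ => Xᵀ * (Matrix.diagonal fun k : Fin m => s + D k)⁻¹ * X)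
      (Xᵀ * -(G * G) * X) σu := aux_hasDerivAt_mul_const (aux_hasDerivAt_const_mul Xᵀ hVi) X
  have hAinv : HasDerivAt
      (fun s : ℝ => (Xᵀ * (Matrix.diagonal fun k : Fin m => s + D k)⁻¹ * X)⁻¹)
      (-((Xᵀ * G * X)⁻¹ * (Xᵀ * -(G * G) * X) * (Xᵀ * G * X)⁻¹)) σu := by
    obtain ⟨u, hu⟩ := hA0unit
    have hu2 : (↑u : Matrix (Fin p) (Fin p) ℝ)
        = Xᵀ * (Matrix.diagonal fun k : Fin m => σu + D k)⁻¹ * X := by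
      rw [hVG']; exact hu
    have hfu := hasFDerivAt_ringInverse (𝕜 := ℝ) (R := Matrix (Fin p) (Fin p) ℝ) u
    rw [hu2] at hfu
    have h := (hfu.comp_hasDerivAt σu hA).congr_of_eventuallyEq
      (Filter.Eventually.of_forall fun s => Matrix.nonsing_inv_eq_ringInverse _)
    refine h.congr_deriv (Eq.symm ?_)
    have hcu : (↑u⁻¹ : Matrix (Fin p) (Fin p) ℝ) = (Xᵀ * G * X)⁻¹ := by
      rw [Matrix.coe_units_inv, hu]
    simp [ContinuousLinearMap.mulLeftRight_apply, hcu]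
  have hMder : HasDerivAt
      (fun s : ℝ => (Xᵀ * (Matrix.diagonal fun k : Fin m => s + D k)⁻¹ * X)⁻¹ * Xᵀ *
        (Matrix.diagonal fun k : Fin m => s + D k)⁻¹)
      (-((Xᵀ * G * X)⁻¹ * (Xᵀ * -(G * G) * X) * (Xᵀ * G * X)⁻¹) * Xᵀ * G
        + (Xᵀ * G * X)⁻¹ * Xᵀ * -(G * G)) σu := by
    have h := aux_hasDerivAt_mul (aux_hasDerivAt_mul_const hAinv Xᵀ) hVi
    rw [hVG'] at h
    exact h
  set Md : Matrix (Fin p) (Fin m) ℝ :=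
    -((Xᵀ * G * X)⁻¹ * (Xᵀ * -(G * G) * X) * (Xᵀ * G * X)⁻¹) * Xᵀ * G
      + (Xᵀ * G * X)⁻¹ * Xᵀ * -(G * G) with hMddef
  -- scalar function through a linear map
  let L : Matrix (Fin p) (Fin m) ℝ →ₗ[ℝ] ℝ :=
    { toFun := fun N => X i ⬝ᵥ (N *ᵥ θ)
      map_add' := by intro a b; simp [Matrix.add_mulVec, dotProduct_add]
      map_smul' := by
        intro r N
        simp [Matrix.smul_mulVec, dotProduct_smul, smul_eq_mul]
    }
  have hscal : HasDerivAt
      (fun s : ℝ => X i ⬝ᵥ (((Xᵀ * (Matrix.diagonal fun k : Fin m => s + D k)⁻¹ * X)⁻¹ * Xᵀ *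
        (Matrix.diagonal fun k : Fin m => s + D k)⁻¹) *ᵥ θ))
      (X i ⬝ᵥ (Md *ᵥ θ)) σu := by
    have h := (L.toContinuousLinearMap.hasFDerivAt).comp_hasDerivAt σu hMder
    exact h
  have hBder : HasDerivAt (fun s : ℝ => D i / (s + D i)) (-(D i) / (σu + D i) ^ 2) σu := by
    have h := (hdcomp i).const_mul (D i)
    have heq : (fun s : ℝ => D i * (s + D i)⁻¹) = fun s : ℝ => D i / (s + D i) :=
      funext fun s => (div_eq_mul_inv _ _).symm
    rw [heq] at h
    refine h.congr_deriv (Eq.symm ?_)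
    ring
  -- the key matrix identity for the derivative value
  have happ : ∀ v : Fin p → ℝ, (X *ᵥ v) i = X i ⬝ᵥ v := fun v => rfl
  have hMd2 : Md = (Xᵀ * G * X)⁻¹ * Xᵀ * G * G * X * ((Xᵀ * G * X)⁻¹ * Xᵀ * G)
      - (Xᵀ * G * X)⁻¹ * Xᵀ * G * G := by
    rw [hMddef]
    simp only [Matrix.mul_neg, Matrix.neg_mul, neg_neg, sub_eq_add_neg, Matrix.mul_assoc]
  have hkey : Md *ᵥ θ =
      -(((Xᵀ * G * X)⁻¹ * Xᵀ * G * G) *ᵥ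
        (θ - X *ᵥ (((Xᵀ * G * X)⁻¹ * Xᵀ * G) *ᵥ θ))) := by
    rw [Matrix.mulVec_sub, Matrix.mulVec_mulVec, Matrix.mulVec_mulVec, neg_sub,
      ← Matrix.sub_mulVec, hMd2]
  constructor
  · refine ((((hasDerivAt_const σu (1:ℝ)).sub hBder).mul_const (θ i)).add
      (hBder.mul hscal)).congr_deriv (Eq.symm ?_)
    simp only [hVG']
    rw [hkey, dotProduct_neg]
    simp only [Pi.sub_apply, happ]
    have hne1 := hw0 i
    have hne2 := (hD i).ne'
    field_simp
    ring
  · -- second form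
    simp only [hVG']
    have h1 : (Matrix.diagonal fun k : Fin m => σu + D k) * G = 1 := by
      rw [hGdef, Matrix.diagonal_mul_diagonal]
      have h : (fun k => (σu + D k) * (σu + D k)⁻¹) = fun _ : Fin m => (1:ℝ) :=
        funext fun k => mul_inv_cancel₀ (hw0 k)
      rw [h, Matrix.diagonal_one]
    have hSg : ((Matrix.diagonal fun k : Fin m => σu + D k) - X * (Xᵀ * G * X)⁻¹ * Xᵀ) * G * G
        = G - X * ((Xᵀ * G * X)⁻¹ * Xᵀ * G * G) := by
      rw [Matrix.sub_mul, Matrix.sub_mul, h1, one_mul]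
      simp only [Matrix.mul_assoc]
    have hGapp : ∀ v : Fin m → ℝ, (G *ᵥ v) i = (σu + D i)⁻¹ * v i := fun v => by
      rw [hGdef]; exact Matrix.mulVec_diagonal _ _ _
    rw [hSg, Matrix.sub_mulVec]
    simp only [Pi.sub_apply]
    rw [hGapp, show ∀ w : Fin m → ℝ, ((X * ((Xᵀ * G * X)⁻¹ * Xᵀ * G * G)) *ᵥ w) i
        = X i ⬝ᵥ (((Xᵀ * G * X)⁻¹ * Xᵀ * G * G) *ᵥ w) from fun w => by
      rw [← Matrix.mulVec_mulVec]; exact happ _]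
    simp only [Pi.sub_apply, happ]
    have hne1 := hw0 i
    have hne2 := (hD i).ne'
    field_simp

end BayesAux
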